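/- Let d and B be positive integers, θ̂ ∈ ℝ^d, Σ ∈ ℝ^{d×d} symmetric positive definite with matrix square root Σ^{1/2}, and θ̃_1,…,θ̃_B i.i.d. with θ̃_i = θ̂ + Σ^{1/2}Z_i for Z_i i.i.d. standard Gaussian vectors. For τ > 0 let Q_τ = {θ : (θ − θ̂)ᵀΣ⁻¹(θ − θ̂) ≤ 2τ}, and for a set Q ⊆ ℝ^d define the selective classifier h_Q(x) = 1 if xᵀθ > 0 for all θ ∈ Q, h_Q(x) = 0 if xᵀθ ≤ 0 for all θ ∈ Q, and h_Q(x) = abstain otherwise; define the sampled selective classifier h̃(x) analogously over the finite set {θ̃_1,…,θ̃_B}. Then for every x ∈ ℝ^d: P( h_{Q_τ}(x) = 0 and h̃(x) = 1 ) ≤ (1 − Φ(−√(2τ)))^B, where Φ is the standard Gaussian cumulative distribution function. -/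

import Mathlib

open MeasureTheory ProbabilityTheory Matrix
open scoped ENNReal NNReal

section Aux

variable {Ω : Type*} [MeasurableSpace Ω] {P : Measure Ω}

/-- Reindexing an independent family along an injective map. -/
lemma aux_reindex {ι κ : Type*} {β : Type*} [MeasurableSpace β]
    {f : ι → Ω → β} (h : iIndepFun f P)
    (g : κ → ι) (hg : Function.Injective g) :
    iIndepFun (fun k => f (g k)) P := by
  classical
  rw [iIndepFun_iff_measure_inter_preimage_eq_mul]
  intro S sets hsets
  have h' := h.measure_inter_preimage_eq_mul (S.map ⟨g, hg⟩)
      (sets := fun i => Function.extend g sets (fun _ => Set.univ) i) ?_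
  · have e1 : (⋂ i ∈ S.map ⟨g, hg⟩, f i ⁻¹' Function.extend g sets (fun _ => Set.univ) i)
        = ⋂ k ∈ S, f (g k) ⁻¹' sets k := by
      ext ω
      simp only [Set.mem_iInter, Finset.mem_map, Function.Embedding.coeFn_mk, Set.mem_preimage]
      constructor
      · intro H k hk
        have := H (g k) ⟨k, hk, rfl⟩
        rwa [hg.extend_apply] at this
      · rintro H i ⟨k, hk, rfl⟩
        rw [hg.extend_apply]; exact H k hk
    have e2 : (∏ i ∈ S.map ⟨g, hg⟩, P (f i ⁻¹' Function.extend g sets (fun _ => Set.univ) i))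
        = ∏ k ∈ S, P (f (g k) ⁻¹' sets k) := by
      rw [Finset.prod_map]
      exact Finset.prod_congr rfl fun k _ => by
        simp only [Function.Embedding.coeFn_mk, hg.extend_apply]
    rw [e1, e2] at h'
    exact h'
  · intro i hi
    rcases Finset.mem_map.mp hi with ⟨k, hk, rfl⟩
    simp only [Function.Embedding.coeFn_mk, hg.extend_apply]
    exact hsets k hk

/-- The joint law of finitely many i.i.d. standard gaussians is the product measure. -/
lemma aux_map_pi {n : ℕ} [IsProbabilityMeasure P] (X : Fin n → Ω → ℝ)
    (hmeas : ∀ j, Measurable (X j))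
    (hindep : iIndepFun X P)
    (hgauss : ∀ j, Measure.map (X j) P = gaussianReal 0 1) :
    Measure.map (fun ω j => X j ω) P = Measure.pi (fun _ : Fin n => gaussianReal 0 1) := by
  refine (Measure.pi_eq (μ := fun _ : Fin n => gaussianReal 0 1) fun s hs => ?_).symm
  rw [Measure.map_apply (measurable_pi_lambda _ hmeas) (MeasurableSet.univ_pi hs)]
  have hpre : (fun ω j => X j ω) ⁻¹' Set.univ.pi s = ⋂ j, X j ⁻¹' s j := by
    ext ω; simp [Set.mem_pi]
  rw [hpre, hindep.meas_iInter fun j => ⟨s j, hs j, rfl⟩]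
  exact Finset.prod_congr rfl fun j _ => by rw [← hgauss j, Measure.map_apply (hmeas j) (hs j)]

/-- A linear functional of i.i.d. standard gaussians is positive with probability at most 1/2. -/
lemma aux_half {n : ℕ} [IsProbabilityMeasure P] (X : Fin n → Ω → ℝ)
    (hmeas : ∀ j, Measurable (X j))
    (hindep : iIndepFun X P)
    (hgauss : ∀ j, Measure.map (X j) P = gaussianReal 0 1) (v : Fin n → ℝ) :
    P {ω | 0 < v ⬝ᵥ fun j => X j ω} ≤ 1 / 2 := by
  have hdot : Measurable fun g : Fin n → ℝ => v ⬝ᵥ g := by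
    simp only [dotProduct]
    exact Finset.measurable_sum _ fun j _ => by fun_prop
  have hU : MeasurableSet {g : Fin n → ℝ | 0 < v ⬝ᵥ g} := measurableSet_lt measurable_const hdot
  have hG : Measurable fun ω (j : Fin n) => X j ω := measurable_pi_lambda _ hmeas
  have hGneg : Measurable fun ω (j : Fin n) => -X j ω :=
    measurable_pi_lambda _ fun j => (hmeas j).neg
  have h1 : Measure.map (fun ω j => X j ω) P = Measure.pi (fun _ => gaussianReal 0 1) :=
    aux_map_pi X hmeas hindep hgauss
  have h2 : Measure.map (fun ω j => -X j ω) P = Measure.pi (fun _ => gaussianReal 0 1) := by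
    refine aux_map_pi (fun j ω => -X j ω) (fun j => (hmeas j).neg) ?_ ?_
    · exact hindep.comp (fun _ => Neg.neg) (fun _ => measurable_neg)
    · intro j
      show Measure.map (fun ω => -X j ω) P = gaussianReal 0 1
      have hc : (fun ω => -X j ω) = (fun y : ℝ => -1 * y) ∘ X j := by funext ω; simp
      rw [hc, ← Measure.map_map (by fun_prop) (hmeas j), hgauss j,
        gaussianReal_map_const_mul]
      have e : (⟨(-1 : ℝ) ^ 2, sq_nonneg _⟩ : NNReal) * 1 = 1 := by ext; norm_num
      congr 1
      · simp
  have key : P {ω | 0 < v ⬝ᵥ fun j => X j ω} = P {ω | (v ⬝ᵥ fun j => X j ω) < 0} := by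
    have e2 : {ω | (v ⬝ᵥ fun j => X j ω) < 0}
        = (fun ω (j : Fin n) => -X j ω) ⁻¹' {g | 0 < v ⬝ᵥ g} := by
      ext ω
      simp only [Set.mem_setOf_eq, Set.mem_preimage]
      rw [show (fun j => -X j ω) = -(fun j => X j ω) from rfl, dotProduct_neg]
      exact (neg_pos).symm
    have e1 : {ω | 0 < v ⬝ᵥ fun j => X j ω}
        = (fun ω (j : Fin n) => X j ω) ⁻¹' {g | 0 < v ⬝ᵥ g} := rfl
    rw [e1, e2, ← Measure.map_apply hG hU, ← Measure.map_apply hGneg hU, h1, h2]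
  have hdisj : Disjoint {ω | 0 < v ⬝ᵥ fun j => X j ω} {ω | (v ⬝ᵥ fun j => X j ω) < 0} := by
    rw [Set.disjoint_left]
    intro ω ha hb
    simp only [Set.mem_setOf_eq] at ha hb
    exact absurd (lt_trans ha hb) (lt_irrefl _)
  have hBmeas : MeasurableSet {ω | (v ⬝ᵥ fun j => X j ω) < 0} :=
    measurableSet_lt (hdot.comp hG) measurable_const
  have hsum : P {ω | 0 < v ⬝ᵥ fun j => X j ω} + P {ω | (v ⬝ᵥ fun j => X j ω) < 0} ≤ 1 := by
    rw [← measure_union hdisj hBmeas]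
    exact prob_le_one
  rw [← key] at hsum
  rw [ENNReal.le_div_iff_mul_le (Or.inl two_ne_zero) (Or.inl ENNReal.ofNat_ne_top), mul_two]
  exact hsum

/-- Events depending on disjoint blocks of an independent family: product formula. -/
lemma aux_blocks {d B : ℕ} [IsProbabilityMeasure P]
    (Z : Fin B × Fin d → Ω → ℝ) (hZmeas : ∀ i, Measurable (Z i))
    (hZindep : iIndepFun Z P) (v : Fin d → ℝ)
    (s : Finset (Fin B)) :
    P (⋂ i ∈ s, {ω | 0 < v ⬝ᵥ fun j => Z (i, j) ω})
      = ∏ i ∈ s, P {ω | 0 < v ⬝ᵥ fun j => Z (i, j) ω} := by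
  classical
  induction s using Finset.induction_on with
  | empty => simp
  | @insert a s ha ih =>
    rw [Finset.set_biInter_insert, Finset.prod_insert ha, ← ih]
    set Sfin : Finset (Fin B × Fin d) := {a} ×ˢ Finset.univ with hSfin
    set Tfin : Finset (Fin B × Fin d) := s ×ˢ Finset.univ with hTfin
    have hdisj : Disjoint Sfin Tfin := by
      rw [hSfin, hTfin, Finset.disjoint_product]
      exact Or.inl (Finset.disjoint_singleton_left.mpr ha)
    have hind := hZindep.indepFun_finset Sfin Tfin hdisj hZmeas
    have mem1 : ∀ j : Fin d, (a, j) ∈ Sfin := fun j =>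
      Finset.mem_product.mpr ⟨Finset.mem_singleton_self a, Finset.mem_univ j⟩
    have mem2 : ∀ i (_ : i ∈ s) (j : Fin d), (i, j) ∈ Tfin := fun i hi j =>
      Finset.mem_product.mpr ⟨hi, Finset.mem_univ j⟩
    set U1 : Set (Sfin → ℝ) := {g | 0 < v ⬝ᵥ fun j => g ⟨(a, j), mem1 j⟩} with hU1def
    set U2 : Set (Tfin → ℝ) := {g | ∀ i (hi : i ∈ s), 0 < v ⬝ᵥ fun j => g ⟨(i, j), mem2 i hi j⟩}
      with hU2def
    have hdotm : ∀ {κ : Type} [Fintype κ] (c : Fin d → κ),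
        Measurable fun g : κ → ℝ => v ⬝ᵥ fun j => g (c j) := by
      intro κ _ c
      simp only [dotProduct]
      exact Finset.measurable_sum _ fun j _ => by fun_prop
    have hU1 : MeasurableSet U1 :=
      measurableSet_lt measurable_const (hdotm (κ := Sfin) fun j => ⟨(a, j), mem1 j⟩)
    have hU2 : MeasurableSet U2 := by
      rw [hU2def]
      have : {g : Tfin → ℝ | ∀ i (hi : i ∈ s), 0 < v ⬝ᵥ fun j => g ⟨(i, j), mem2 i hi j⟩}
          = ⋂ i, ⋂ (hi : i ∈ s), {g | 0 < v ⬝ᵥ fun j => g ⟨(i, j), mem2 i hi j⟩} := by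
        ext g; simp [Set.mem_iInter]
      rw [this]
      exact MeasurableSet.iInter fun i => MeasurableSet.iInter fun hi =>
        measurableSet_lt measurable_const (hdotm (κ := Tfin) fun j => ⟨(i, j), mem2 i hi j⟩)
    have eA : {ω | 0 < v ⬝ᵥ fun j => Z (a, j) ω}
        = (fun ω (p : Sfin) => Z p ω) ⁻¹' U1 := rfl
    have eB : (⋂ i ∈ s, {ω | 0 < v ⬝ᵥ fun j => Z (i, j) ω})
        = (fun ω (p : Tfin) => Z p ω) ⁻¹' U2 := by
      ext ω
      simp only [Set.mem_iInter, Set.mem_preimage, hU2def, Set.mem_setOf_eq]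
    rw [eA, eB, hind.measure_inter_preimage_eq_mul U1 U2 hU1 hU2]

/-- Symmetry bound for the gaussian tail. -/
lemma aux_tail {s : ℝ} (hs : 0 < s) :
    (gaussianReal 0 1 (Set.Iic (-s))).toReal ≤ 1 / 2 := by
  have hmap : (gaussianReal 0 1).map (fun x => -1 * x) = gaussianReal 0 1 := by
    have h := gaussianReal_map_const_mul (μ := 0) (v := 1) (-1)
    have e : (⟨(-1 : ℝ) ^ 2, sq_nonneg _⟩ : NNReal) * 1 = 1 := by ext; norm_num
    rw [h]
    congr 1
    · simp
  have hIci : gaussianReal 0 1 (Set.Iic (-s)) = gaussianReal 0 1 (Set.Ici s) := by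
    conv_lhs => rw [← hmap]
    rw [Measure.map_apply (by fun_prop) measurableSet_Iic]
    congr 1
    ext x
    simp only [Set.mem_preimage, Set.mem_Iic, Set.mem_Ici, neg_one_mul]
    constructor <;> intro h <;> linarith
  have hdisj : Disjoint (Set.Iic (-s)) (Set.Ici s) := by
    rw [Set.disjoint_left]
    intro x hx hx'
    simp only [Set.mem_Iic, Set.mem_Ici] at hx hx'
    linarith
  have hsum : gaussianReal 0 1 (Set.Iic (-s)) + gaussianReal 0 1 (Set.Ici s) ≤ 1 := by
    rw [← measure_union hdisj measurableSet_Ici]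
    exact prob_le_one
  rw [← hIci] at hsum
  have h2 : gaussianReal 0 1 (Set.Iic (-s)) ≤ 1 / 2 := by
    rw [ENNReal.le_div_iff_mul_le (Or.inl two_ne_zero) (Or.inl ENNReal.ofNat_ne_top), mul_two]
    exact hsum
  calc (gaussianReal 0 1 (Set.Iic (-s))).toReal
      ≤ (1 / 2 : ℝ≥0∞).toReal := ENNReal.toReal_mono (by norm_num) h2
    _ = 1 / 2 := by norm_num

end Aux

/-- first half of Theorem 5 of the supplement: for the
ellipsoid `Q_τ = {θ : (θ−θ̂)ᵀΣ⁻¹(θ−θ̂) ≤ 2τ}` and `B` i.i.d. Gaussian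
samples `θ̃ i = θ̂ + Σ^{1/2} Z i`, the probability that the ellipsoid
selective classifier outputs `0` at `x` (every `θ ∈ Q_τ` has `xᵀθ ≤ 0`)
while the sampled selective classifier outputs `1` (every `i` has
`xᵀθ̃ i > 0`) is at most `(1 − Φ(−√(2τ)))^B`. -/
theorem stmt10 {d B : ℕ} (hd : 0 < d) (hB : 0 < B)
    {Ω : Type*} [MeasurableSpace Ω] (P : Measure Ω) [IsProbabilityMeasure P]
    (θhat : Fin d → ℝ) (S Ssq : Matrix (Fin d) (Fin d) ℝ)
    (hSsym : S.IsSymm) (hSpd : S.PosDef) (hsq : Ssq * Ssq = S)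
    (Z : Fin B × Fin d → Ω → ℝ)
    (hZmeas : ∀ i, Measurable (Z i))
    (hZindep : iIndepFun Z P)
    (hZgauss : ∀ i, Measure.map (Z i) P = gaussianReal 0 1)
    (θt : Fin B → Ω → Fin d → ℝ)
    (hθt : ∀ i ω, θt i ω = θhat + Ssq.mulVec (fun j => Z (i, j) ω))
    (τ : ℝ) (hτ : 0 < τ) (x : Fin d → ℝ) :
    P {ω | (∀ θ : Fin d → ℝ,
            (θ - θhat) ⬝ᵥ S⁻¹.mulVec (θ - θhat) ≤ 2 * τ → x ⬝ᵥ θ ≤ 0)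
          ∧ (∀ i : Fin B, 0 < x ⬝ᵥ θt i ω)}
      ≤ ENNReal.ofReal
          ((1 - (gaussianReal 0 1 (Set.Iic (-Real.sqrt (2 * τ)))).toReal) ^ B) := by
  by_cases hC : ∀ θ : Fin d → ℝ,
      (θ - θhat) ⬝ᵥ S⁻¹.mulVec (θ - θhat) ≤ 2 * τ → x ⬝ᵥ θ ≤ 0
  swap
  · have hempty : {ω | (∀ θ : Fin d → ℝ,
        (θ - θhat) ⬝ᵥ S⁻¹.mulVec (θ - θhat) ≤ 2 * τ → x ⬝ᵥ θ ≤ 0)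
        ∧ (∀ i : Fin B, 0 < x ⬝ᵥ θt i ω)} = ∅ := by
      ext ω; simp only [Set.mem_setOf_eq, Set.mem_empty_iff_false, iff_false]
      tauto
    rw [hempty, measure_empty]
    exact zero_le
  · have hx0 : x ⬝ᵥ θhat ≤ 0 := by
      refine hC θhat ?_
      rw [sub_self, Matrix.mulVec_zero, dotProduct_zero]
      positivity
    set v : Fin d → ℝ := Matrix.vecMul x Ssq with hv
    have hsubset : {ω | (∀ θ : Fin d → ℝ,
        (θ - θhat) ⬝ᵥ S⁻¹.mulVec (θ - θhat) ≤ 2 * τ → x ⬝ᵥ θ ≤ 0)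
        ∧ (∀ i : Fin B, 0 < x ⬝ᵥ θt i ω)}
        ⊆ ⋂ i ∈ (Finset.univ : Finset (Fin B)), {ω | 0 < v ⬝ᵥ fun j => Z (i, j) ω} := by
      intro ω hω
      simp only [Set.mem_iInter]
      intro i _
      have h2 := hω.2 i
      rw [hθt i ω, dotProduct_add, dotProduct_mulVec] at h2
      simp only [Set.mem_setOf_eq]
      linarith
    refine le_trans (measure_mono hsubset) ?_
    rw [aux_blocks Z hZmeas hZindep v Finset.univ]
    have hhalf : ∀ i : Fin B, P {ω | 0 < v ⬝ᵥ fun j => Z (i, j) ω} ≤ 1 / 2 := by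
      intro i
      refine aux_half (fun j => Z (i, j)) (fun j => hZmeas (i, j))
        (aux_reindex hZindep (fun j => (i, j)) ?_) (fun j => hZgauss (i, j)) v
      intro a b hab
      simpa using congrArg Prod.snd hab
    have hs : 0 < Real.sqrt (2 * τ) := Real.sqrt_pos.mpr (by linarith)
    have h12 : (1 / 2 : ℝ)
        ≤ 1 - (gaussianReal 0 1 (Set.Iic (-Real.sqrt (2 * τ)))).toReal := by
      have := aux_tail hs
      linarith
    calc ∏ i ∈ (Finset.univ : Finset (Fin B)), P {ω | 0 < v ⬝ᵥ fun j => Z (i, j) ω}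
        ≤ ∏ _i ∈ (Finset.univ : Finset (Fin B)), (1 / 2 : ℝ≥0∞) :=
          Finset.prod_le_prod' fun i _ => hhalf i
      _ = (1 / 2 : ℝ≥0∞) ^ B := by simp
      _ = ENNReal.ofReal ((1 / 2 : ℝ) ^ B) := by
          rw [ENNReal.ofReal_pow (by norm_num)]
          congr 1
          rw [ENNReal.ofReal_div_of_pos (by norm_num), ENNReal.ofReal_one,
            ENNReal.ofReal_ofNat]
      _ ≤ ENNReal.ofReal
          ((1 - (gaussianReal 0 1 (Set.Iic (-Real.sqrt (2 * τ)))).toReal) ^ B) :=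
          ENNReal.ofReal_le_ofReal (pow_le_pow_left₀ (by norm_num) h12 B)
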